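/- Let n ≥ 2, k ≥ 0, 0 ≤ b ≤ a ≤ n with k > (n-a)+(n-b). Among all admissible pairs (l,d) (satisfying k+a+b ≡ n+l+d mod 2, b ≤ d, |k-l|+|a-d| ≤ n-b, |n-a+b-d| ≤ k+l, with l ≥ 0 and 0 ≤ d ≤ n), the function φ(l,d) = (l+d-n)(l-d+n+2) attains its minimum exactly at the unique pair (l,d) = (k-n+b, a). -/

import Mathlib

/-- An admissible twist `(l,d)` for the representation `Sym^k H ⊗ Λ^{a,b}_top E`. -/
def Admissible (n k a b l d : ℤ) : Prop :=
  0 ≤ l ∧ 0 ≤ d ∧ d ≤ n ∧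
    (2 ∣ (k + a + b - (n + l + d))) ∧
    b ≤ d ∧
    |k - l| + |a - d| ≤ n - b ∧
    |n - a + b - d| ≤ k + l

/-- The curvature term. -/
def phi (n l d : ℤ) : ℤ := (l + d - n) * (l - d + n + 2)

/-- First case of the classification of minimal twists: for
`k > (n-a) + (n-b)` the unique minimal twist is `R^{k-n+b, a}`. -/
theorem minimal_twist_first_case
    (n k a b : ℤ) (hn : 2 ≤ n) (hk : 0 ≤ k)
    (hb : 0 ≤ b) (hba : b ≤ a) (han : a ≤ n)
    (hbig : (n - a) + (n - b) < k) :
    Admissible n k a b (k - n + b) a ∧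
      ∀ l d : ℤ, Admissible n k a b l d →
        phi n (k - n + b) a ≤ phi n l d ∧
          (phi n l d = phi n (k - n + b) a → l = k - n + b ∧ d = a) := by
  constructor
  · refine ⟨by linarith, by linarith, han, ⟨0, by ring⟩, hba, ?_, ?_⟩
    · rw [show k - (k - n + b) = n - b by ring, sub_self, abs_zero,
        abs_of_nonneg (by linarith : (0:ℤ) ≤ n - b)]; linarith
    · rw [abs_le]; constructor <;> [skip; skip] <;>
        rcases le_or_gt (n - a + b - a) 0 with h | h <;> linarith
  · rintro l d ⟨hl, hd0, hdn, hpar, hbd, htri, hlast⟩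
    have h1 : k - l + |a - d| ≤ n - b :=
      le_trans (add_le_add_left (le_abs_self _) _) htri
    have h2 : a - d ≤ |a - d| := le_abs_self _
    have h3 : d - a ≤ |a - d| := by rw [abs_sub_comm]; exact le_abs_self _
    have hs : k + a + b - 2 * n ≤ l + d - n := by linarith
    have ht : k - a + b + 2 ≤ l - d + n + 2 := by linarith
    have hs0 : 0 < k + a + b - 2 * n := by linarith
    have ht0 : 0 < k - a + b + 2 := by linarith
    have hphi0 : phi n (k - n + b) a = (k + a + b - 2 * n) * (k - a + b + 2) := by
      unfold phi; ring
    constructor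
    · rw [hphi0]; unfold phi; nlinarith
    · intro heq
      rw [hphi0] at heq; unfold phi at heq
      have e1 : l + d - n ≤ k + a + b - 2 * n := by nlinarith
      have e2 : l - d + n + 2 ≤ k - a + b + 2 := by nlinarith
      constructor <;> linarith
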